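/- arXiv:1505.07547 — 2 statements merged into one kernel-verified Lean document; each statement's English description precedes it below -/
import Mathlib

section
/- Let F be a field, let S ⊆ F be a finite set, let s be a positive integer, and let P ∈ F[X_1,...,X_m] be a nonzero polynomial of total degree at most d. Then the number of points a ∈ S^m at which P vanishes with multiplicity at least s satisfies s·#{a ∈ S^m : mult(P,a) ≥ s} ≤ d·|S|^{m-1}. -/
/-- The Hasse derivative of a multivariate polynomial `P` with respect to the index
vector `i : Fin m → ℕ`: the coefficient of `Z^i` in `P(X + Z)`. -/
noncomputable def mvHasseDeriv {F : Type*} [CommSemiring F] {m : ℕ}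
    (i : Fin m → ℕ) (P : MvPolynomial (Fin m) F) : MvPolynomial (Fin m) F :=
  MvPolynomial.coeff (Finsupp.equivFunOnFinite.symm i)
    (MvPolynomial.eval₂ (MvPolynomial.C.comp MvPolynomial.C)
      (fun k => MvPolynomial.C (MvPolynomial.X k) + MvPolynomial.X k) P)

/-- The multiplicity of `P` at a point `a`: the largest `M` (possibly `⊤`) such that
all Hasse derivatives of `P` of weight `< M` vanish at `a`. -/
noncomputable def mvMult {F : Type*} [CommSemiring F] {m : ℕ}
    (P : MvPolynomial (Fin m) F) (a : Fin m → F) : ℕ∞ :=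
  sSup {M : ℕ∞ | ∀ i : Fin m → ℕ, ((∑ k, i k : ℕ) : ℕ∞) < M →
    MvPolynomial.eval a (mvHasseDeriv i P) = 0}

open MvPolynomial

/-- The shift (translation) of a multivariate polynomial: `P(X) ↦ P(a + X)`. -/
noncomputable def shiftHom {F : Type*} [CommSemiring F] {m : ℕ} (a : Fin m → F) :
    MvPolynomial (Fin m) F →+* MvPolynomial (Fin m) F :=
  eval₂Hom C (fun k => C (a k) + X k)

lemma shiftHom_apply {F : Type*} [CommSemiring F] {m : ℕ} (a : Fin m → F)
    (P : MvPolynomial (Fin m) F) :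
    shiftHom a P = eval₂ C (fun k => C (a k) + X k) P := rfl

@[simp] lemma shiftHom_X {F : Type*} [CommSemiring F] {m : ℕ} (a : Fin m → F) (k : Fin m) :
    shiftHom a (X k) = C (a k) + X k := by simp [shiftHom]

@[simp] lemma shiftHom_C {F : Type*} [CommSemiring F] {m : ℕ} (a : Fin m → F) (c : F) :
    shiftHom a (C c) = C c := by simp [shiftHom]

/-- The order (minimal total degree of a monomial) of a multivariate polynomial, as `ℕ∞`. -/
noncomputable def ordE {F : Type*} [CommSemiring F] {m : ℕ} (Q : MvPolynomial (Fin m) F) : ℕ∞ :=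
  Q.support.inf fun e => ((∑ k, e k : ℕ) : ℕ∞)

lemma ordE_le {F : Type*} [CommSemiring F] {m : ℕ} {Q : MvPolynomial (Fin m) F}
    {e : Fin m →₀ ℕ} (he : e ∈ Q.support) : ordE Q ≤ ((∑ k, e k : ℕ) : ℕ∞) :=
  Finset.inf_le he

lemma exists_ordE {F : Type*} [CommSemiring F] {m : ℕ} {Q : MvPolynomial (Fin m) F}
    (hQ : Q ≠ 0) : ∃ e ∈ Q.support, ordE Q = ((∑ k, e k : ℕ) : ℕ∞) :=
  Finset.exists_mem_eq_inf Q.support (MvPolynomial.support_nonempty.mpr hQ) _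

lemma eval_mvHasseDeriv {F : Type*} [CommSemiring F] {m : ℕ} (a : Fin m → F)
    (i : Fin m → ℕ) (P : MvPolynomial (Fin m) F) :
    MvPolynomial.eval a (mvHasseDeriv i P)
      = MvPolynomial.coeff (Finsupp.equivFunOnFinite.symm i) (shiftHom a P) := by
  rw [mvHasseDeriv, shiftHom_apply, ← MvPolynomial.coeff_map,
    MvPolynomial.eval₂_comp_left (MvPolynomial.map (MvPolynomial.eval a))]
  have hf : ((MvPolynomial.map (MvPolynomial.eval a)).comp
      (MvPolynomial.C.comp MvPolynomial.C)) = (C : F →+* MvPolynomial (Fin m) F) := by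
    ext c; simp
  have hg : (⇑(MvPolynomial.map (MvPolynomial.eval a)) ∘
      fun k => MvPolynomial.C (MvPolynomial.X k) + MvPolynomial.X k)
      = fun k : Fin m => MvPolynomial.C (a k) + MvPolynomial.X k := by
    funext k; simp
  rw [hf, hg]

/-- The multiplicity of `P` at `a` is the order of the shifted polynomial `P(a + X)`. -/
lemma mvMult_eq_ordE {F : Type*} [CommSemiring F] {m : ℕ} (P : MvPolynomial (Fin m) F)
    (a : Fin m → F) : mvMult P a = ordE (shiftHom a P) := by
  rw [mvMult]
  have hset : {M : ℕ∞ | ∀ i : Fin m → ℕ, ((∑ k, i k : ℕ) : ℕ∞) < M →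
      MvPolynomial.eval a (mvHasseDeriv i P) = 0} = Set.Iic (ordE (shiftHom a P)) := by
    ext M
    simp only [Set.mem_setOf_eq, Set.mem_Iic]
    constructor
    · intro h
      refine Finset.le_inf fun e he => ?_
      by_contra hlt
      push_neg at hlt
      have h0 := h (⇑e) hlt
      rw [eval_mvHasseDeriv, Finsupp.equivFunOnFinite_symm_coe] at h0
      exact (MvPolynomial.mem_support_iff.mp he) h0
    · intro hM i hi
      rw [eval_mvHasseDeriv]
      by_contra hne
      have hmem : Finsupp.equivFunOnFinite.symm i ∈ (shiftHom a P).support :=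
        MvPolynomial.mem_support_iff.mpr hne
      have h2 : ordE (shiftHom a P) ≤ ((∑ k, i k : ℕ) : ℕ∞) := by
        simpa using ordE_le hmem
      exact absurd (lt_of_lt_of_le hi (le_trans hM h2)) (lt_irrefl _)
  rw [hset, csSup_Iic]

lemma shiftHom_shiftHom {F : Type*} [CommRing F] {m : ℕ} (a : Fin m → F)
    (P : MvPolynomial (Fin m) F) : shiftHom (fun k => -a k) (shiftHom a P) = P := by
  have h := MvPolynomial.eval₂_comp_left (shiftHom (fun k => -a k)) C
    (fun k : Fin m => C (a k) + X k) P
  rw [shiftHom_apply a, h]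
  have h1 : (shiftHom (fun k : Fin m => -a k)).comp (C : F →+* MvPolynomial (Fin m) F) = C := by
    ext c; simp [shiftHom]
  have h2 : (⇑(shiftHom (fun k : Fin m => -a k)) ∘ fun k : Fin m => C (a k) + X k)
      = fun k : Fin m => (X k : MvPolynomial (Fin m) F) := by
    funext k
    simp [shiftHom]
  rw [h1, h2]
  exact MvPolynomial.eval₂_eta P

lemma shiftHom_ne_zero {F : Type*} [CommRing F] {m : ℕ} (a : Fin m → F)
    {P : MvPolynomial (Fin m) F} (hP : P ≠ 0) : shiftHom a P ≠ 0 := by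
  intro h
  apply hP
  have := congrArg (shiftHom (fun k => -a k)) h
  rwa [shiftHom_shiftHom, map_zero] at this

lemma finSuccEquiv_shiftHom {F : Type*} [CommSemiring F] {m : ℕ} (b : F) (a' : Fin m → F)
    (P : MvPolynomial (Fin (m + 1)) F) :
    finSuccEquiv F m (shiftHom (Fin.cons b a') P)
      = Polynomial.eval₂ (Polynomial.C.comp (shiftHom a'))
          (Polynomial.X + Polynomial.C (C b)) (finSuccEquiv F m P) := by
  have key : ((finSuccEquiv F m :
        MvPolynomial (Fin (m + 1)) F →+* Polynomial (MvPolynomial (Fin m) F)).comp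
        (shiftHom (Fin.cons b a')))
      = (Polynomial.eval₂RingHom (Polynomial.C.comp (shiftHom a'))
          (Polynomial.X + Polynomial.C (C b))).comp
        (finSuccEquiv F m : MvPolynomial (Fin (m + 1)) F →+* Polynomial (MvPolynomial (Fin m) F))
      := by
    apply MvPolynomial.ringHom_ext
    · intro c
      simp [finSuccEquiv_apply]
    · intro i
      refine Fin.cases ?_ (fun i => ?_) i
      · simp only [RingHom.coe_comp, Function.comp_apply, RingHom.coe_coe, shiftHom_X,
          Fin.cons_zero, map_add, finSuccEquiv_X_zero]
        have : finSuccEquiv F m (C b : MvPolynomial (Fin (m + 1)) F) = Polynomial.C (C b) := by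
          simp [finSuccEquiv_apply]
        rw [this]
        simp [add_comm]
      · simp only [RingHom.coe_comp, Function.comp_apply, RingHom.coe_coe, shiftHom_X,
          Fin.cons_succ, map_add, finSuccEquiv_X_succ]
        have : finSuccEquiv F m (C (a' i) : MvPolynomial (Fin (m + 1)) F)
          = Polynomial.C (C (a' i)) := by simp [finSuccEquiv_apply]
        rw [this]
        simp
  have := RingHom.congr_fun key P
  simpa using this

lemma coeff_cons_shiftHom {F : Type*} [CommSemiring F] {m : ℕ} (b : F) (a' : Fin m → F)
    (P : MvPolynomial (Fin (m + 1)) F) (e : Fin m →₀ ℕ) (j : ℕ) :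
    MvPolynomial.coeff (Finsupp.cons j e) (shiftHom (Fin.cons b a') P)
      = ((∑ k ∈ Finset.range ((finSuccEquiv F m P).natDegree + 1),
          Polynomial.C (MvPolynomial.coeff e (shiftHom a' ((finSuccEquiv F m P).coeff k)))
            * Polynomial.X ^ k).comp (Polynomial.X + Polynomial.C b)).coeff j := by
  set Q := finSuccEquiv F m P with hQdef
  set t := Q.natDegree with htdef
  set g : Polynomial F := ∑ k ∈ Finset.range (t + 1),
      Polynomial.C (MvPolynomial.coeff e (shiftHom a' (Q.coeff k))) * Polynomial.X ^ k
    with hgdef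
  have hg : ∀ k, g.coeff k
      = if k ∈ Finset.range (t + 1) then MvPolynomial.coeff e (shiftHom a' (Q.coeff k)) else 0 := by
    intro k
    rw [hgdef, Polynomial.finset_sum_coeff]
    simp only [Polynomial.coeff_C_mul, Polynomial.coeff_X_pow, mul_ite, mul_one, mul_zero]
    rw [Finset.sum_ite_eq (Finset.range (t + 1)) k]
  have hgdeg : g.natDegree ≤ t := by
    rw [Polynomial.natDegree_le_iff_coeff_eq_zero]
    intro N hN
    rw [hg N, if_neg (by simp only [Finset.mem_range]; omega)]
  rw [← MvPolynomial.finSuccEquiv_coeff_coeff e (shiftHom (Fin.cons b a') P) j,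
    finSuccEquiv_shiftHom,
    Polynomial.eval₂_eq_sum_range' _ (Nat.lt_succ_self t) _,
    Polynomial.comp, Polynomial.eval₂_eq_sum_range' _ (lt_of_le_of_lt hgdeg (Nat.lt_succ_self t)) _,
    Polynomial.finset_sum_coeff, Polynomial.finset_sum_coeff, MvPolynomial.coeff_sum]
  refine Finset.sum_congr rfl fun k hk => ?_
  simp only [RingHom.coe_comp, Function.comp_apply]
  rw [Polynomial.coeff_C_mul, Polynomial.coeff_C_mul, Polynomial.coeff_X_add_C_pow,
    Polynomial.coeff_X_add_C_pow, hg k, if_pos hk]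
  have hC : (C b : MvPolynomial (Fin m) F) ^ (k - j) * ((k.choose j : ℕ) : MvPolynomial (Fin m) F)
      = C (b ^ (k - j) * (k.choose j : F)) := by
    rw [← map_pow, ← map_natCast (C : F →+* MvPolynomial (Fin m) F), ← map_mul]
  rw [hC, mul_comm (shiftHom a' (Q.coeff k)), MvPolynomial.coeff_C_mul, mul_comm]

lemma core_bound {F : Type*} [Field F] {m : ℕ} (P : MvPolynomial (Fin (m + 1)) F) (hP : P ≠ 0)
    (a' : Fin m → F) (S : Finset F) :
    ∑ b ∈ S, (ordE (shiftHom (Fin.cons b a') P)).toNat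
      ≤ S.card * (ordE (shiftHom a' ((finSuccEquiv F m P).leadingCoeff))).toNat
        + (finSuccEquiv F m P).natDegree := by
  classical
  set Q := finSuccEquiv F m P with hQdef
  set t := Q.natDegree with htdef
  have hQ : Q ≠ 0 := by
    intro h
    exact hP ((finSuccEquiv F m).injective (by rw [← hQdef, h, map_zero]))
  have hPt : Q.leadingCoeff ≠ 0 := Polynomial.leadingCoeff_ne_zero.mpr hQ
  have hR : shiftHom a' Q.leadingCoeff ≠ 0 := shiftHom_ne_zero _ hPt
  obtain ⟨e, he, hwe⟩ := exists_ordE hR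
  rw [hwe]
  set w := ∑ k, e k with hwdef
  rw [ENat.toNat_coe]
  set g : Polynomial F := ∑ k ∈ Finset.range (t + 1),
      Polynomial.C (MvPolynomial.coeff e (shiftHom a' (Q.coeff k))) * Polynomial.X ^ k with hgdef
  have hg : ∀ k, g.coeff k
      = if k ∈ Finset.range (t + 1) then MvPolynomial.coeff e (shiftHom a' (Q.coeff k)) else 0 := by
    intro k
    rw [hgdef, Polynomial.finset_sum_coeff]
    simp only [Polynomial.coeff_C_mul, Polynomial.coeff_X_pow, mul_ite, mul_one, mul_zero]
    rw [Finset.sum_ite_eq (Finset.range (t + 1)) k]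
  have hgt : g.coeff t = MvPolynomial.coeff e (shiftHom a' Q.leadingCoeff) := by
    rw [hg t, if_pos (Finset.self_mem_range_succ t)]
    rfl
  have hge : MvPolynomial.coeff e (shiftHom a' Q.leadingCoeff) ≠ 0 :=
    MvPolynomial.mem_support_iff.mp he
  have hgne : g ≠ 0 := fun h => hge (by rw [← hgt, h, Polynomial.coeff_zero])
  have hgdeg : g.natDegree ≤ t := by
    rw [Polynomial.natDegree_le_iff_coeff_eq_zero]
    intro N hN
    rw [hg N, if_neg (by simp only [Finset.mem_range]; omega)]
  have hpoint : ∀ b : F, (ordE (shiftHom (Fin.cons b a') P)).toNat ≤ w + g.rootMultiplicity b := by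
    intro b
    set j0 := (g.comp (Polynomial.X + Polynomial.C b)).natTrailingDegree with hj0
    have hcompne : g.comp (Polynomial.X + Polynomial.C b) ≠ 0 :=
      Polynomial.comp_X_add_C_ne_zero_iff.mpr hgne
    have hcoeffne : (g.comp (Polynomial.X + Polynomial.C b)).coeff j0 ≠ 0 :=
      fun h => hcompne (Polynomial.trailingCoeff_eq_zero.mp h)
    have hmem : Finsupp.cons j0 e ∈ (shiftHom (Fin.cons b a') P).support := by
      rw [MvPolynomial.mem_support_iff, coeff_cons_shiftHom]
      exact hcoeffne
    have hord := ordE_le hmem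
    have hsum : (∑ k, (Finsupp.cons j0 e) k) = j0 + w := by
      rw [Fin.sum_univ_succ]
      simp [hwdef]
    rw [hsum] at hord
    have hto : (ordE (shiftHom (Fin.cons b a') P)).toNat ≤ j0 + w := by
      have := ENat.toNat_le_toNat hord (ENat.coe_ne_top _)
      simpa only [ENat.toNat_coe] using this
    rw [Polynomial.rootMultiplicity_eq_natTrailingDegree, ← hj0]
    omega
  calc ∑ b ∈ S, (ordE (shiftHom (Fin.cons b a') P)).toNat
      ≤ ∑ b ∈ S, (w + g.rootMultiplicity b) := Finset.sum_le_sum fun b _ => hpoint b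
    _ = S.card * w + ∑ b ∈ S, g.rootMultiplicity b := by
        rw [Finset.sum_add_distrib, Finset.sum_const, smul_eq_mul]
    _ ≤ S.card * w + t := by
        have h1 : ∑ b ∈ S, g.rootMultiplicity b ≤ t := by
          calc ∑ b ∈ S, g.rootMultiplicity b
              = ∑ b ∈ S, g.roots.count b := by
                refine Finset.sum_congr rfl fun b _ => (Polynomial.count_roots g).symm
            _ ≤ ∑ b ∈ g.roots.toFinset, g.roots.count b := by
                refine Finset.sum_le_sum_of_ne_zero fun x hx hne => ?_
                rw [Multiset.mem_toFinset]
                by_contra hmem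
                exact hne (Multiset.count_eq_zero.mpr hmem)
            _ = Multiset.card g.roots := Multiset.toFinset_sum_count_eq _
            _ ≤ g.natDegree := Polynomial.card_roots' g
            _ ≤ t := hgdeg
        omega

lemma ordE_eq_zero_fin_zero {F : Type*} [CommSemiring F] {Q : MvPolynomial (Fin 0) F}
    (hQ : Q ≠ 0) : ordE Q = 0 := by
  obtain ⟨e, _, h⟩ := exists_ordE hQ
  rw [h]
  simp

lemma totalDegree_fin_zero {F : Type*} [CommSemiring F] (Q : MvPolynomial (Fin 0) F) :
    Q.totalDegree = 0 := by
  apply Nat.eq_zero_of_le_zero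
  apply Finset.sup_le
  intro e _
  have he : e = 0 := Finsupp.ext fun k => k.elim0
  simp [he]

lemma sum_piFinset_succ {α M : Type*} [AddCommMonoid M] (S : Finset α) {m : ℕ}
    (f : (Fin (m + 1) → α) → M) :
    ∑ a ∈ Fintype.piFinset (fun _ : Fin (m + 1) => S), f a
      = ∑ a' ∈ Fintype.piFinset (fun _ : Fin m => S), ∑ b ∈ S, f (Fin.cons b a') := by
  have h2 := Finset.sum_product (s := Fintype.piFinset (fun _ : Fin m => S)) (t := S)
    (f := fun p => f (Fin.cons p.2 p.1))
  rw [← h2]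
  refine Finset.sum_nbij' (fun a => (Fin.tail a, a 0)) (fun p => Fin.cons p.2 p.1)
    ?_ ?_ ?_ ?_ ?_
  · intro a ha
    rw [Fintype.mem_piFinset] at ha
    refine Finset.mem_product.mpr ⟨?_, ha 0⟩
    rw [Fintype.mem_piFinset]
    intro i
    exact ha i.succ
  · intro p hp
    rw [Finset.mem_product] at hp
    rw [Fintype.mem_piFinset]
    intro i
    refine Fin.cases ?_ (fun i => ?_) i
    · simpa using hp.2
    · simp only [Fin.cons_succ]
      exact Fintype.mem_piFinset.mp hp.1 i
  · intro a _
    simp [Fin.cons_self_tail]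
  · intro p _
    simp [Fin.tail_cons]
  · intro a _
    rw [Fin.cons_self_tail]

lemma key_sum {F : Type*} [Field F] :
    ∀ (m : ℕ) (P : MvPolynomial (Fin m) F), P ≠ 0 → ∀ S : Finset F,
      ∑ a ∈ Fintype.piFinset (fun _ : Fin m => S), (ordE (shiftHom a P)).toNat
        ≤ P.totalDegree * S.card ^ (m - 1) := by
  intro m
  induction m with
  | zero =>
    intro P hP S
    have h0 : ∀ a ∈ Fintype.piFinset (fun _ : Fin 0 => S), (ordE (shiftHom a P)).toNat = 0 := by
      intro a _
      rw [ordE_eq_zero_fin_zero (shiftHom_ne_zero _ hP)]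
      rfl
    rw [Finset.sum_eq_zero h0]
    exact Nat.zero_le _
  | succ m ih =>
    intro P hP S
    set Q := finSuccEquiv F m P with hQdef
    set t := Q.natDegree with htdef
    have hQ : Q ≠ 0 := by
      intro h
      exact hP ((finSuccEquiv F m).injective (by rw [← hQdef, h, map_zero]))
    have hPt : Q.leadingCoeff ≠ 0 := Polynomial.leadingCoeff_ne_zero.mpr hQ
    have hx : Q.leadingCoeff.totalDegree + t ≤ P.totalDegree := by
      have := totalDegree_coeff_finSuccEquiv_add_le P t (by rw [← hQdef]; exact hPt)
      rw [← hQdef] at this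
      exact this
    have hcard : (Fintype.piFinset (fun _ : Fin m => S)).card = S.card ^ m := by
      rw [Fintype.card_piFinset]
      simp
    calc ∑ a ∈ Fintype.piFinset (fun _ : Fin (m + 1) => S), (ordE (shiftHom a P)).toNat
        = ∑ a' ∈ Fintype.piFinset (fun _ : Fin m => S), ∑ b ∈ S,
            (ordE (shiftHom (Fin.cons b a') P)).toNat := sum_piFinset_succ S _
      _ ≤ ∑ a' ∈ Fintype.piFinset (fun _ : Fin m => S),
            (S.card * (ordE (shiftHom a' Q.leadingCoeff)).toNat + t) :=
          Finset.sum_le_sum fun a' _ => core_bound P hP a' S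
      _ = S.card * (∑ a' ∈ Fintype.piFinset (fun _ : Fin m => S),
            (ordE (shiftHom a' Q.leadingCoeff)).toNat) + t * S.card ^ m := by
          rw [Finset.sum_add_distrib, Finset.sum_const, ← Finset.mul_sum, hcard, smul_eq_mul,
            mul_comm (S.card ^ m) t]
      _ ≤ S.card * (Q.leadingCoeff.totalDegree * S.card ^ (m - 1)) + t * S.card ^ m := by
          have := ih Q.leadingCoeff hPt S
          exact Nat.add_le_add_right (Nat.mul_le_mul_left _ this) _
      _ ≤ P.totalDegree * S.card ^ ((m + 1) - 1) := by
          simp only [Nat.add_sub_cancel]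
          cases m with
          | zero =>
            have h0 : Q.leadingCoeff.totalDegree = 0 := totalDegree_fin_zero _
            simp only [h0, Nat.zero_mul, Nat.mul_zero, Nat.zero_add, pow_zero, Nat.mul_one]
            omega
          | succ n =>
            have heq : S.card * (Q.leadingCoeff.totalDegree * S.card ^ (n + 1 - 1))
                + t * S.card ^ (n + 1)
                = (Q.leadingCoeff.totalDegree + t) * S.card ^ (n + 1) := by
              simp only [Nat.add_sub_cancel]
              ring
            rw [heq]
            exact Nat.mul_le_mul_right _ hx

/-- **Multiplicity Schwartz–Zippel (counting form).**
If `P` is a nonzero polynomial of total degree at most `d` in `m` variables over a field `F`,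
`S ⊆ F` is finite and `s > 0`, then `s ⬝ #{a ∈ S^m : mult(P,a) ≥ s} ≤ d ⬝ |S|^(m-1)`. -/
theorem mult_schwartz_zippel_count {F : Type*} [Field F] {m : ℕ} (S : Finset F) (d s : ℕ)
    (hs : 0 < s) (P : MvPolynomial (Fin m) F) (hP : P ≠ 0) (hdeg : P.totalDegree ≤ d) :
    s * Nat.card {a : Fin m → F // (∀ k, a k ∈ S) ∧ (s : ℕ∞) ≤ mvMult P a}
      ≤ d * S.card ^ (m - 1) := by
  classical
  set A := (Fintype.piFinset (fun _ : Fin m => S)).filter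
    (fun a => (s : ℕ∞) ≤ mvMult P a) with hA
  have hiff : ∀ a : Fin m → F, ((∀ k, a k ∈ S) ∧ (s : ℕ∞) ≤ mvMult P a) ↔ a ∈ A := by
    intro a
    simp [hA, Fintype.mem_piFinset]
  have hcount : Nat.card {a : Fin m → F // (∀ k, a k ∈ S) ∧ (s : ℕ∞) ≤ mvMult P a} = A.card := by
    rw [Nat.card_congr (Equiv.subtypeEquivRight hiff), Nat.card_eq_fintype_card,
      Fintype.card_coe]
  rw [hcount]
  have hterm : ∀ a ∈ A, s ≤ (ordE (shiftHom a P)).toNat := by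
    intro a ha
    have hm : (s : ℕ∞) ≤ mvMult P a := (Finset.mem_filter.mp ha).2
    rw [mvMult_eq_ordE] at hm
    obtain ⟨e, _, hord⟩ := exists_ordE (shiftHom_ne_zero a hP)
    rw [hord] at hm
    rw [hord, ENat.toNat_coe]
    exact_mod_cast hm
  calc s * A.card = ∑ _a ∈ A, s := by rw [Finset.sum_const, smul_eq_mul, mul_comm]
    _ ≤ ∑ a ∈ A, (ordE (shiftHom a P)).toNat := Finset.sum_le_sum hterm
    _ ≤ ∑ a ∈ Fintype.piFinset (fun _ : Fin m => S), (ordE (shiftHom a P)).toNat :=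
        Finset.sum_le_sum_of_subset (Finset.filter_subset _ _)
    _ ≤ P.totalDegree * S.card ^ (m - 1) := key_sum m P hP S
    _ ≤ d * S.card ^ (m - 1) := Nat.mul_le_mul_right _ hdeg
end

section
/- Let F be a field, let P ∈ F[X_1,...,X_m], let a, b ∈ F^m, and let l be a vector of nonnegative integers. Define the univariate polynomial Q_l(T) = P^{(l)}(a + b·T) ∈ F[T]. Then for every t ∈ F and every nonnegative integer j, the j-th (univariate) Hasse derivative of Q_l satisfies Q_l^{(j)}(t) = Σ_{i : wt(i) = j} binom(l+i, l) · P^{(l+i)}(a + t·b) · b^i. -/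
section Aux

open MvPolynomial

variable {F : Type*} [CommSemiring F] {m : ℕ}

/-- The Taylor expansion ring hom: `P ↦ P(X + Z)`. -/
noncomputable def texp {F : Type*} [CommSemiring F] {m : ℕ} :
    MvPolynomial (Fin m) F →+* MvPolynomial (Fin m) (MvPolynomial (Fin m) F) :=
  MvPolynomial.eval₂Hom (MvPolynomial.C.comp MvPolynomial.C)
    (fun k => MvPolynomial.C (MvPolynomial.X k) + MvPolynomial.X k)

lemma mvHasseDeriv_eq (i : Fin m → ℕ) (P : MvPolynomial (Fin m) F) :
    mvHasseDeriv i P = (texp P).coeff (Finsupp.equivFunOnFinite.symm i) := rfl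

lemma sum_single_eq (g : Fin m → ℕ) :
    (∑ k, Finsupp.single k (g k)) = Finsupp.equivFunOnFinite.symm g := by
  ext j; simp [Finsupp.finset_sum_apply, Finsupp.single_apply]

lemma prod_monomial {ι : Type*} (s : Finset ι) (d : ι → (Fin m →₀ ℕ)) (c : ι → F) :
    ∏ k ∈ s, monomial (d k) (c k) = monomial (∑ k ∈ s, d k) (∏ k ∈ s, c k) := by
  classical
  induction s using Finset.cons_induction with
  | empty => simp
  | cons a s ha ih => rw [Finset.prod_cons, Finset.sum_cons, Finset.prod_cons, ih, monomial_mul]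

lemma texp_monomial (n : Fin m →₀ ℕ) (c : F) :
    texp (monomial n c) =
      ∑ s ∈ Fintype.piFinset (fun k => Finset.range (n k + 1)),
        monomial (Finsupp.equivFunOnFinite.symm s)
          (((∏ k, (n k).choose (s k)) : ℕ) • monomial (n - Finsupp.equivFunOnFinite.symm s) c) := by
  classical
  have hfac : ∀ k : Fin m, (C (X k) + X k : MvPolynomial (Fin m) (MvPolynomial (Fin m) F)) ^ (n k)
      = ∑ s ∈ Finset.range (n k + 1),
          monomial (Finsupp.single k s)
            (((n k).choose s : ℕ) • (X k ^ (n k - s) : MvPolynomial (Fin m) F)) := by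
    intro k
    rw [add_comm, add_pow]
    refine Finset.sum_congr rfl fun s _ => ?_
    rw [X_pow_eq_monomial, ← C_pow, mul_comm (monomial (Finsupp.single k s) 1) _, C_mul_monomial,
      mul_one, ← C_eq_coe_nat, mul_comm, C_mul_monomial, nsmul_eq_mul]
  have h0 : texp (monomial n c)
      = C (C c) * ∏ k, (C (X k) + X k : MvPolynomial (Fin m) (MvPolynomial (Fin m) F)) ^ (n k) := by
    rw [texp]
    rw [coe_eval₂Hom, eval₂_monomial]
    rw [Finsupp.prod_fintype _ _ (fun k => pow_zero _)]
    rfl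
  rw [h0]
  simp only [hfac]
  rw [Finset.prod_univ_sum]
  rw [Finset.mul_sum]
  refine Finset.sum_congr rfl fun g hg => ?_
  rw [prod_monomial, sum_single_eq]
  rw [C_mul_monomial]
  congr 1
  have e1 : ∀ k : Fin m, (n - Finsupp.equivFunOnFinite.symm g) k = n k - g k := fun k => by
    rw [Finsupp.tsub_apply]; rfl
  rw [monomial_eq, Finsupp.prod_fintype _ _ (fun k => pow_zero _)]
  simp only [nsmul_eq_mul, Nat.cast_prod, Finset.prod_mul_distrib, e1]
  ring

lemma mvHasseDeriv_monomial (i : Fin m → ℕ) (n : Fin m →₀ ℕ) (c : F) :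
    mvHasseDeriv i (monomial n c) =
      ((∏ k, (n k).choose (i k)) : ℕ) • monomial (n - Finsupp.equivFunOnFinite.symm i) c := by
  classical
  rw [mvHasseDeriv_eq, texp_monomial, MvPolynomial.coeff_sum]
  have hinj : Function.Injective (Finsupp.equivFunOnFinite.symm : (Fin m → ℕ) → (Fin m →₀ ℕ)) :=
    Finsupp.equivFunOnFinite.symm.injective
  have hcond : ∀ s : Fin m → ℕ,
      (Finsupp.equivFunOnFinite.symm s = Finsupp.equivFunOnFinite.symm i) ↔ s = i :=
    fun s => hinj.eq_iff
  simp only [coeff_monomial, hcond]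
  rw [Finset.sum_ite_eq' (Fintype.piFinset fun k => Finset.range (n k + 1)) i]
  by_cases hi : i ∈ Fintype.piFinset fun k => Finset.range (n k + 1)
  · rw [if_pos hi]
  · rw [if_neg hi]
    obtain ⟨k, hk⟩ : ∃ k, ¬ i k < n k + 1 := by
      simpa [Fintype.mem_piFinset, Finset.mem_range] using hi
    have : (n k).choose (i k) = 0 := Nat.choose_eq_zero_of_lt (by omega)
    rw [Finset.prod_eq_zero (Finset.mem_univ k) this, zero_smul]

lemma mvHasseDeriv_add (i : Fin m → ℕ) (P Q : MvPolynomial (Fin m) F) :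
    mvHasseDeriv i (P + Q) = mvHasseDeriv i P + mvHasseDeriv i Q := by
  simp [mvHasseDeriv_eq, map_add, MvPolynomial.coeff_add]

lemma mvHasseDeriv_zero (i : Fin m → ℕ) : mvHasseDeriv i (0 : MvPolynomial (Fin m) F) = 0 := by
  simp [mvHasseDeriv_eq]

lemma mvHasseDeriv_sum {ι : Type*} (s : Finset ι) (f : ι → MvPolynomial (Fin m) F)
    (i : Fin m → ℕ) :
    mvHasseDeriv i (∑ x ∈ s, f x) = ∑ x ∈ s, mvHasseDeriv i (f x) := by
  classical
  induction s using Finset.cons_induction with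
  | empty => simp [mvHasseDeriv_zero]
  | cons a s ha ih => rw [Finset.sum_cons, Finset.sum_cons, mvHasseDeriv_add, ih]

lemma symm_add (l i : Fin m → ℕ) :
    Finsupp.equivFunOnFinite.symm (l + i)
      = Finsupp.equivFunOnFinite.symm l + Finsupp.equivFunOnFinite.symm i := by
  ext k; rfl

lemma nat_key (n l i : ℕ) : n.choose l * (n - l).choose i = (l + i).choose l * n.choose (l + i) := by
  rcases le_or_gt (l+i) n with h | h
  · have h2 := Nat.choose_mul (n := n) (k := l + i) (s := l) (Nat.le_add_right _ _)
    rw [Nat.add_sub_cancel_left] at h2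
    rw [← h2, mul_comm]
  · have h1 : n.choose (l+i) = 0 := Nat.choose_eq_zero_of_lt h
    rcases le_or_gt l n with h2 | h2
    · have : n - l < i := by omega
      simp [Nat.choose_eq_zero_of_lt this, h1]
    · simp [Nat.choose_eq_zero_of_lt h2, h1]

lemma mvHasseDeriv_comp (l i : Fin m → ℕ) (P : MvPolynomial (Fin m) F) :
    mvHasseDeriv i (mvHasseDeriv l P)
      = ((∏ k, (l k + i k).choose (l k)) : ℕ) • mvHasseDeriv (l + i) P := by
  classical
  conv_lhs => rw [P.as_sum]
  conv_rhs => rw [P.as_sum]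
  rw [mvHasseDeriv_sum, mvHasseDeriv_sum, mvHasseDeriv_sum, Finset.smul_sum]
  refine Finset.sum_congr rfl fun n _ => ?_
  rw [mvHasseDeriv_monomial, smul_monomial, mvHasseDeriv_monomial, mvHasseDeriv_monomial,
    smul_monomial, smul_monomial, symm_add, ← tsub_tsub]
  rw [smul_monomial, smul_smul]
  congr 1
  rw [smul_smul]
  congr 1
  have key : ∀ k : Fin m,
      ((n - Finsupp.equivFunOnFinite.symm l) k).choose (i k) * (n k).choose (l k)
      = (l k + i k).choose (l k) * (n k).choose ((l + i) k) := by
    intro k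
    have h3 : (n - Finsupp.equivFunOnFinite.symm l) k = n k - l k := by
      rw [Finsupp.tsub_apply]; rfl
    have h4 : (l + i) k = l k + i k := rfl
    rw [h3, h4, mul_comm]
    exact nat_key (n k) (l k) (i k)
  rw [← Finset.prod_mul_distrib, ← Finset.prod_mul_distrib]
  exact Finset.prod_congr rfl (fun k _ => key k)

lemma coeff_aeval_line (a b : Fin m → F) (j : ℕ) (R : MvPolynomial (Fin m) F) :
    (MvPolynomial.aeval
        (fun k => Polynomial.C (a k) + Polynomial.C (b k) * Polynomial.X) R).coeff j
      = ∑ i ∈ Finset.Nat.antidiagonalTuple m j,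
          MvPolynomial.eval a (mvHasseDeriv i R) * ∏ k, b k ^ i k := by
  classical
  set χ : MvPolynomial (Fin m) (MvPolynomial (Fin m) F) →+* Polynomial F :=
    MvPolynomial.eval₂Hom (Polynomial.C.comp (MvPolynomial.eval a))
      (fun k => Polynomial.C (b k) * Polynomial.X) with hχ
  have h1 : (MvPolynomial.aeval
      (fun k => Polynomial.C (a k) + Polynomial.C (b k) * Polynomial.X) R : Polynomial F)
      = χ (texp R) := by
    have h : (MvPolynomial.aeval
        (fun k => Polynomial.C (a k) + Polynomial.C (b k) * Polynomial.X)
          : MvPolynomial (Fin m) F →ₐ[F] Polynomial F).toRingHom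
        = χ.comp (texp : MvPolynomial (Fin m) F →+* _) := by
      apply MvPolynomial.ringHom_ext <;> intro r <;>
        simp [hχ, texp, Polynomial.algebraMap_eq]
    exact DFunLike.congr_fun h R
  rw [h1, hχ, coe_eval₂Hom, eval₂_eq' _ _ (texp R), Polynomial.finset_sum_coeff]
  have hterm : ∀ d : Fin m →₀ ℕ,
      ((Polynomial.C.comp (MvPolynomial.eval a)) ((texp R).coeff d)
          * ∏ k, (Polynomial.C (b k) * Polynomial.X) ^ (d k)).coeff j
        = if j = ∑ k, d k then
            MvPolynomial.eval a ((texp R).coeff d) * ∏ k, b k ^ d k else 0 := by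
    intro d
    have : (∏ k, (Polynomial.C (b k) * Polynomial.X) ^ (d k))
        = Polynomial.C (∏ k, b k ^ d k) * Polynomial.X ^ (∑ k, d k) := by
      simp only [mul_pow, Finset.prod_mul_distrib, ← Polynomial.C_pow, ← map_prod]
      rw [Finset.prod_pow_eq_pow_sum]
    rw [this, RingHom.comp_apply, ← mul_assoc, ← Polynomial.C_mul, Polynomial.coeff_C_mul,
      Polynomial.coeff_X_pow]
    by_cases h : j = ∑ k, d k <;> simp [h]
  simp only [hterm]
  set S := (texp R).support.image (⇑Finsupp.equivFunOnFinite) with hS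
  have h2 : ∑ d ∈ (texp R).support,
      (if j = ∑ k, d k then MvPolynomial.eval a ((texp R).coeff d) * ∏ k, b k ^ d k else 0)
      = ∑ i ∈ S, (if j = ∑ k, i k then
          MvPolynomial.eval a ((texp R).coeff (Finsupp.equivFunOnFinite.symm i))
            * ∏ k, b k ^ i k else 0) := by
    rw [hS, Finset.sum_image (fun x _ y _ h => Finsupp.equivFunOnFinite.injective h)]
    refine Finset.sum_congr rfl fun d _ => ?_
    rw [Equiv.symm_apply_apply]
    rfl
  rw [h2]
  have hsub1 : S ⊆ S ∪ Finset.Nat.antidiagonalTuple m j := Finset.subset_union_left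
  have hsub2 : Finset.Nat.antidiagonalTuple m j ⊆ S ∪ Finset.Nat.antidiagonalTuple m j :=
    Finset.subset_union_right
  rw [Finset.sum_subset hsub1 ?h1']
  case h1' =>
    intro i _ hi
    have : Finsupp.equivFunOnFinite.symm i ∉ (texp R).support := by
      intro hmem
      exact hi (by
        rw [hS, Finset.mem_image]
        exact ⟨_, hmem, by simp⟩)
    rw [MvPolynomial.notMem_support_iff.mp this]
    simp
  rw [← Finset.sum_subset hsub2 ?h2']
  case h2' =>
    intro i _ hi
    rw [if_neg]
    intro h
    exact hi (Finset.Nat.mem_antidiagonalTuple.mpr h.symm)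
  refine Finset.sum_congr rfl fun i hi => ?_
  rw [if_pos (Finset.Nat.mem_antidiagonalTuple.mp hi).symm, mvHasseDeriv_eq]

end Aux

/-- **Derivatives of the restriction of a derivative to a line.**
For `Q_l(T) = P^{(l)}(a + b·T)`, the `j`-th univariate Hasse derivative satisfies
`Q_l^{(j)}(t) = ∑_{i : wt(i) = j} binom(l+i, l) · P^{(l+i)}(a + t·b) · b^i`. -/
theorem hasseDeriv_restriction_to_line {F : Type*} [Field F] {m : ℕ}
    (P : MvPolynomial (Fin m) F) (a b : Fin m → F) (l : Fin m → ℕ) (t : F) (j : ℕ) :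
    (Polynomial.hasseDeriv j
        (MvPolynomial.aeval
          (fun k => Polynomial.C (a k) + Polynomial.C (b k) * Polynomial.X)
          (mvHasseDeriv l P))).eval t =
      ∑ i ∈ Finset.Nat.antidiagonalTuple m j,
        ((∏ k, (l k + i k).choose (l k) : ℕ) : F) *
          MvPolynomial.eval (a + t • b) (mvHasseDeriv (l + i) P) * ∏ k, b k ^ i k := by
  rw [← Polynomial.taylor_coeff]
  have htaylor : Polynomial.taylor t
      (MvPolynomial.aeval
        (fun k => Polynomial.C (a k) + Polynomial.C (b k) * Polynomial.X) (mvHasseDeriv l P))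
      = MvPolynomial.aeval
        (fun k => Polynomial.C ((a + t • b) k) + Polynomial.C (b k) * Polynomial.X)
          (mvHasseDeriv l P) := by
    rw [Polynomial.taylor_apply]
    have h : ((Polynomial.aeval (Polynomial.X + Polynomial.C t) :
          Polynomial F →ₐ[F] Polynomial F).comp
        (MvPolynomial.aeval
          (fun k => Polynomial.C (a k) + Polynomial.C (b k) * Polynomial.X)))
        = MvPolynomial.aeval
          (fun k => Polynomial.C ((a + t • b) k) + Polynomial.C (b k) * Polynomial.X) := by
      apply MvPolynomial.algHom_ext
      intro k
      simp [Pi.add_apply, Pi.smul_apply, smul_eq_mul, map_add, map_mul]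
      ring
    have := DFunLike.congr_fun h (mvHasseDeriv l P)
    simpa [Polynomial.comp_eq_aeval] using this
  rw [htaylor, coeff_aeval_line]
  refine Finset.sum_congr rfl fun i hi => ?_
  rw [mvHasseDeriv_comp, map_nsmul, nsmul_eq_mul]
end
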